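/- Let T₁, …, T_m : H → H be cutter operators with ∩_{i=1}^m Fix T_i ≠ ∅. Set T := T_m⋯T₁, S_i := T_i⋯T₁ for i = 1,…,m, and S₀ := Id. Then for any x ∈ H, any z ∈ ∩_{i=1}^m Fix T_i, and any L ≥ ‖x − z‖ with L > 0: (1/(2L)) ∑_{i=1}^m ‖S_i x − S_{i−1} x‖² ≤ ‖Tx − x‖. -/

import Mathlib

open RealInnerProductSpace

/-- `compSeq T n = T (n-1) ∘ ⋯ ∘ T 0`, i.e. the composition `S_n := T_n ⋯ T_1`
(with 1-based indexing as in the paper). -/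
def compSeq {H : Type*} (T : ℕ → H → H) : ℕ → H → H
  | 0 => id
  | n + 1 => T n ∘ compSeq T n

lemma cutter_step {H : Type*} [NormedAddCommGroup H] [InnerProductSpace ℝ H]
    (Ti : H → H) (y z : H) (hzfix : Ti z = z)
    (hc : ⟪y - Ti y, z - Ti y⟫ ≤ 0) :
    ‖Ti y - z‖ ^ 2 + ‖Ti y - y‖ ^ 2 ≤ ‖y - z‖ ^ 2 := by
  have key : ‖(y - Ti y) - (z - Ti y)‖ ^ 2
      = ‖y - Ti y‖ ^ 2 - 2 * ⟪y - Ti y, z - Ti y⟫ + ‖z - Ti y‖ ^ 2 := by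
    rw [@norm_sub_sq_real]
  have h1 : (y - Ti y) - (z - Ti y) = y - z := by abel
  rw [h1] at key
  have h2 : ‖Ti y - z‖ = ‖z - Ti y‖ := norm_sub_rev _ _
  have h3 : ‖Ti y - y‖ = ‖y - Ti y‖ := norm_sub_rev _ _
  rw [h2, h3]
  nlinarith

theorem stmt_10 {H : Type*} [NormedAddCommGroup H] [InnerProductSpace ℝ H]
    (m : ℕ) (T : ℕ → H → H)
    (hcutter : ∀ i < m, ∀ x : H, ∀ z ∈ {x : H | T i x = x},
      ⟪x - T i x, z - T i x⟫ ≤ 0)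
    (x z : H) (hz : ∀ i < m, T i z = z)
    (L : ℝ) (hL : L ≥ ‖x - z‖) (hLpos : L > 0) :
    (1 / (2 * L)) * ∑ i ∈ Finset.range m,
        ‖compSeq T (i + 1) x - compSeq T i x‖ ^ 2 ≤
      ‖compSeq T m x - x‖ := by
  -- main induction
  have main : ∀ n ≤ m, (∑ i ∈ Finset.range n,
      ‖compSeq T (i + 1) x - compSeq T i x‖ ^ 2) + ‖compSeq T n x - z‖ ^ 2
      ≤ ‖x - z‖ ^ 2 := by
    intro n hn
    induction n with
    | zero => simp [compSeq]
    | succ k ih =>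
      have hk : k < m := hn
      have ihk := ih (le_of_lt hk)
      have step := cutter_step (T k) (compSeq T k x) z (hz k hk)
        (hcutter k hk (compSeq T k x) z (hz k hk))
      have hcomp : compSeq T (k + 1) x = T k (compSeq T k x) := rfl
      rw [Finset.sum_range_succ, hcomp]
      nlinarith
  have hsum := main m le_rfl
  have hSmz : ‖compSeq T m x - z‖ ≤ ‖x - z‖ := by
    have hnn : (0:ℝ) ≤ ∑ i ∈ Finset.range m,
        ‖compSeq T (i + 1) x - compSeq T i x‖ ^ 2 :=
      Finset.sum_nonneg fun i _ => sq_nonneg _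
    nlinarith [norm_nonneg (compSeq T m x - z), norm_nonneg (x - z)]
  have htri : ‖x - z‖ - ‖compSeq T m x - z‖ ≤ ‖compSeq T m x - x‖ := by
    have := norm_sub_norm_le (x - z) (compSeq T m x - z)
    have h1 : (x - z) - (compSeq T m x - z) = x - compSeq T m x := by abel
    rw [h1] at this
    have h2 : ‖x - compSeq T m x‖ = ‖compSeq T m x - x‖ := norm_sub_rev _ _
    linarith
  have hbound : (∑ i ∈ Finset.range m,
      ‖compSeq T (i + 1) x - compSeq T i x‖ ^ 2) ≤ 2 * L * ‖compSeq T m x - x‖ := by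
    nlinarith [norm_nonneg (compSeq T m x - z), norm_nonneg (x - z),
      norm_nonneg (compSeq T m x - x)]
  rw [div_mul_eq_mul_div, one_mul, div_le_iff₀ (by linarith)]
  linarith [hbound]
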